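/- Any permutation π of {1,…,n} can be partitioned into at most ⌈√n⌉ increasing subsequences together with at most ⌈√n⌉ decreasing subsequences. (Dilworth-type decomposition used in the unit-Monge labeling scheme.) -/

import Mathlib

open Finset

namespace Stmt3Aux

variable {n : ℕ}

/-- A decreasing chain for `π`. -/
def IsDecChain (π : Equiv.Perm (Fin n)) (C : Finset (Fin n)) : Prop :=
  ∀ i ∈ C, ∀ j ∈ C, i < j → π j < π i

open scoped Classical in
/-- A maximum-cardinality decreasing chain inside `S`. -/
noncomputable def maxChain (π : Equiv.Perm (Fin n)) (S : Finset (Fin n)) : Finset (Fin n) :=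
  (Finset.exists_max_image ((S.powerset).filter (fun C => IsDecChain π C)) Finset.card
    ⟨∅, Finset.mem_filter.mpr ⟨Finset.empty_mem_powerset S, by simp [IsDecChain]⟩⟩).choose

open scoped Classical in
lemma maxChain_spec (π : Equiv.Perm (Fin n)) (S : Finset (Fin n)) :
    maxChain π S ∈ (S.powerset).filter (fun C => IsDecChain π C) ∧
      ∀ C ∈ (S.powerset).filter (fun C => IsDecChain π C),
        C.card ≤ (maxChain π S).card := by
  have h := (Finset.exists_max_image ((S.powerset).filter (fun C => IsDecChain π C)) Finset.card
    ⟨∅, Finset.mem_filter.mpr ⟨Finset.empty_mem_powerset S, by simp [IsDecChain]⟩⟩).choose_spec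
  exact h

lemma maxChain_subset (π : Equiv.Perm (Fin n)) (S : Finset (Fin n)) :
    maxChain π S ⊆ S := by
  classical
  have h := (maxChain_spec π S).1
  simp only [mem_filter, mem_powerset] at h
  exact h.1

lemma maxChain_chain (π : Equiv.Perm (Fin n)) (S : Finset (Fin n)) :
    IsDecChain π (maxChain π S) := by
  classical
  have h := (maxChain_spec π S).1
  simp only [mem_filter, mem_powerset] at h
  exact h.2

lemma le_maxChain_card (π : Equiv.Perm (Fin n)) (S C : Finset (Fin n))
    (hCS : C ⊆ S) (hC : IsDecChain π C) : C.card ≤ (maxChain π S).card := by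
  classical
  exact (maxChain_spec π S).2 C (by simp [mem_filter, mem_powerset, hCS, hC])

/-- Iterated removal of maximum decreasing chains. -/
noncomputable def R (π : Equiv.Perm (Fin n)) : ℕ → Finset (Fin n)
  | 0 => univ
  | k + 1 => R π k \ maxChain π (R π k)

lemma R_succ_subset (π : Equiv.Perm (Fin n)) (k : ℕ) : R π (k + 1) ⊆ R π k :=
  sdiff_subset

lemma R_anti (π : Equiv.Perm (Fin n)) {k l : ℕ} (h : k ≤ l) : R π l ⊆ R π k := by
  induction l with
  | zero => simp_all
  | succ m ih =>
    rcases Nat.lt_or_ge k (m + 1) with h' | h'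
    · exact (R_succ_subset π m).trans (ih (Nat.lt_succ_iff.mp h'))
    · have : k = m + 1 := le_antisymm h h'
      subst this; exact subset_rfl

/-- After `s` peeling steps there is no decreasing chain of length `> s`. -/
lemma noLongChain (π : Equiv.Perm (Fin n)) (s : ℕ) (hn : n ≤ s * s) :
    ∀ C ⊆ R π s, IsDecChain π C → C.card ≤ s := by
  by_contra hcon
  push_neg at hcon
  obtain ⟨C, hCS, hC, hcard⟩ := hcon
  have key : ∀ k ≤ s, (R π k).card + k * (s + 1) ≤ n := by
    intro k hk
    induction k with
    | zero =>
      simp [R, Finset.card_univ]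
    | succ m ih =>
      have hm : m ≤ s := Nat.le_of_succ_le hk
      have ihm := ih hm
      have hCm : C ⊆ R π m := hCS.trans (R_anti π hm)
      have hD : s + 1 ≤ (maxChain π (R π m)).card :=
        le_trans hcard (le_maxChain_card π (R π m) C hCm hC)
      have hDsub : maxChain π (R π m) ⊆ R π m := maxChain_subset π (R π m)
      have hDle : (maxChain π (R π m)).card ≤ (R π m).card := card_le_card hDsub
      have hsd : (R π (m + 1)).card = (R π m).card - (maxChain π (R π m)).card := by
        rw [show R π (m + 1) = R π m \ maxChain π (R π m) from rfl, card_sdiff_of_subset hDsub]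
      have hmul : (m + 1) * (s + 1) = m * (s + 1) + (s + 1) := by ring
      omega
  have h1 := key s le_rfl
  have h2 : C.card ≤ (R π s).card := card_le_card hCS
  have h3 : s * (s + 1) = s * s + s := by ring
  omega

open scoped Classical in
/-- Length of a longest decreasing chain inside `S` ending at `i`. -/
noncomputable def dval (π : Equiv.Perm (Fin n)) (S : Finset (Fin n)) (i : Fin n) : ℕ :=
  ((S.powerset).filter (fun C => IsDecChain π C ∧ i ∈ C ∧ ∀ x ∈ C, x ≤ i)).sup Finset.card

open scoped Classical in
lemma singleton_mem_dfilter (π : Equiv.Perm (Fin n)) {S : Finset (Fin n)} {i : Fin n}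
    (hi : i ∈ S) :
    ({i} : Finset (Fin n)) ∈
      (S.powerset).filter (fun C => IsDecChain π C ∧ i ∈ C ∧ ∀ x ∈ C, x ≤ i) := by
  simp only [mem_filter, mem_powerset, singleton_subset_iff, mem_singleton]
  refine ⟨hi, ?_, trivial, fun x hx => le_of_eq hx⟩
  intro a ha b hb hab
  simp only [mem_singleton] at ha hb
  subst ha; subst hb; exact absurd hab (lt_irrefl _)

lemma one_le_dval (π : Equiv.Perm (Fin n)) {S : Finset (Fin n)} {i : Fin n} (hi : i ∈ S) :
    1 ≤ dval π S i := by
  classical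
  have h := Finset.le_sup (f := Finset.card) (singleton_mem_dfilter π hi)
  rw [card_singleton] at h
  exact h

lemma dval_le (π : Equiv.Perm (Fin n)) {S : Finset (Fin n)} {s : ℕ}
    (h : ∀ C ⊆ S, IsDecChain π C → C.card ≤ s) (i : Fin n) : dval π S i ≤ s := by
  classical
  refine Finset.sup_le ?_
  intro C hC
  simp only [mem_filter, mem_powerset] at hC
  exact h C hC.1 hC.2.1

lemma dval_lt (π : Equiv.Perm (Fin n)) {S : Finset (Fin n)} {i j : Fin n}
    (hi : i ∈ S) (hj : j ∈ S) (hij : i < j) (hπ : π j < π i) :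
    dval π S i < dval π S j := by
  classical
  obtain ⟨C, hCmem, hCsup⟩ := Finset.exists_mem_eq_sup
    ((S.powerset).filter (fun C => IsDecChain π C ∧ i ∈ C ∧ ∀ x ∈ C, x ≤ i))
    ⟨{i}, singleton_mem_dfilter π hi⟩ Finset.card
  simp only [mem_filter, mem_powerset] at hCmem
  obtain ⟨hCS, hCchain, hiC, hle⟩ := hCmem
  have hjC : j ∉ C := fun h => absurd hij (not_lt.mpr (hle j h))
  have hchain' : IsDecChain π (insert j C) := by
    intro a ha b hb hab
    rcases mem_insert.mp ha with rfl | haC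
    · rcases mem_insert.mp hb with rfl | hbC
      · exact absurd hab (lt_irrefl _)
      · exact absurd hab (not_lt.mpr ((hle b hbC).trans hij.le))
    · rcases mem_insert.mp hb with rfl | hbC
      · rcases eq_or_lt_of_le (hle a haC) with rfl | h'
        · exact hπ
        · exact hπ.trans (hCchain a haC i hiC h')
      · exact hCchain a haC b hbC hab
  have hmem' : insert j C ∈
      (S.powerset).filter (fun C => IsDecChain π C ∧ j ∈ C ∧ ∀ x ∈ C, x ≤ j) := by
    simp only [mem_filter, mem_powerset, insert_subset_iff]
    refine ⟨⟨hj, hCS⟩, hchain', mem_insert_self _ _, ?_⟩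
    intro x hx
    rcases mem_insert.mp hx with rfl | hxC
    · exact le_rfl
    · exact (hle x hxC).trans hij.le
  have hsup := Finset.le_sup (f := Finset.card) hmem'
  have hcard : (insert j C).card = C.card + 1 := card_insert_of_notMem hjC
  unfold dval
  omega

/-- Main construction, for any `s` with `1 ≤ s` and `n ≤ s * s`. -/
theorem main (π : Equiv.Perm (Fin n)) (s : ℕ) (hs : 1 ≤ s) (hn : n ≤ s * s) :
    ∃ c : Fin n → ℕ,
      (∀ i, c i < 2 * s) ∧
      (∀ i j : Fin n, i < j → c i = c j →
        (c i < s → π i < π j) ∧ (s ≤ c i → π j < π i)) := by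
  classical
  have hpred : s - 1 + 1 = s := by omega
  have hfind : ∀ i : Fin n, i ∉ R π s → ∃ k, i ∉ R π (k + 1) := by
    intro i hi
    exact ⟨s - 1, by rwa [hpred]⟩
  have hbound := noLongChain π s hn
  refine ⟨fun i => if h : i ∈ R π s then dval π (R π s) i - 1
      else s + Nat.find (hfind i h), ?_, ?_⟩
  · intro i
    by_cases h : i ∈ R π s
    · simp only [dif_pos h]
      have := dval_le π hbound i
      omega
    · simp only [dif_neg h]
      have hk : Nat.find (hfind i h) ≤ s - 1 :=
        Nat.find_le (by rwa [hpred])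
      omega
  · intro i j hij hc
    -- facts about indices outside the remainder
    have hout : ∀ (i : Fin n) (h : i ∉ R π s),
        i ∈ maxChain π (R π (Nat.find (hfind i h))) ∧ Nat.find (hfind i h) < s := by
      intro i h
      set k := Nat.find (hfind i h) with hkdef
      have hk1 : i ∉ R π (k + 1) := Nat.find_spec (hfind i h)
      have hk2 : i ∈ R π k := by
        cases hk : k with
        | zero => simp [R]
        | succ m =>
          have := Nat.find_min (hfind i h) (m := m) (by omega)
          simpa using this
      have hk3 : i ∈ maxChain π (R π k) := by
        by_contra hcon
        exact hk1 (by simp [R, mem_sdiff, hk2, hcon])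
      have hk4 : k ≤ s - 1 := Nat.find_le (by rwa [hpred])
      exact ⟨hk3, by omega⟩
    simp only at hc
    by_cases hi : i ∈ R π s <;> by_cases hj : j ∈ R π s
    · -- both in remainder: increasing class
      simp only [dif_pos hi, dif_pos hj] at hc ⊢
      have h1 := one_le_dval π hi
      have h2 := one_le_dval π hj
      constructor
      · intro _
        by_contra hlt
        have hne : π i ≠ π j := fun h => absurd (π.injective h) (ne_of_lt hij)
        have hgt : π j < π i := lt_of_le_of_ne (not_lt.mp hlt) (Ne.symm hne)
        have := dval_lt π hi hj hij hgt
        omega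
      · intro hge
        have := dval_le π hbound i
        omega
    · -- mixed: impossible
      exfalso
      simp only [dif_pos hi, dif_neg hj] at hc
      have := dval_le π hbound i
      omega
    · exfalso
      simp only [dif_neg hi, dif_pos hj] at hc
      have := dval_le π hbound j
      omega
    · -- both removed: same peeled chain, decreasing class
      simp only [dif_neg hi, dif_neg hj] at hc ⊢
      have hk : Nat.find (hfind i hi) = Nat.find (hfind j hj) := by omega
      obtain ⟨hmi, _⟩ := hout i hi
      obtain ⟨hmj, _⟩ := hout j hj
      rw [hk] at hmi
      have hchain := maxChain_chain π (R π (Nat.find (hfind j hj)))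
      constructor
      · intro h; omega
      · intro _; exact hchain i hmi j hmj hij

end Stmt3Aux

/-- Any permutation of `{1,…,n}` can be partitioned into at most `⌈√n⌉`
increasing subsequences together with at most `⌈√n⌉` decreasing subsequences:
there is a coloring with `2⌈√n⌉` colors such that low colors are increasing
classes and high colors are decreasing classes. -/
theorem stmt_3 (n : ℕ) (π : Equiv.Perm (Fin n)) :
    ∃ c : Fin n → ℕ,
      (∀ i, c i < 2 * ⌈Real.sqrt n⌉₊) ∧
      (∀ i j : Fin n, i < j → c i = c j →
        (c i < ⌈Real.sqrt n⌉₊ → π i < π j) ∧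
        (⌈Real.sqrt n⌉₊ ≤ c i → π j < π i)) := by
  rcases Nat.eq_zero_or_pos n with rfl | hn
  · exact ⟨fun i => i.elim0, fun i => i.elim0, fun i => i.elim0⟩
  · have hs : 1 ≤ ⌈Real.sqrt n⌉₊ := by
      have : (0 : ℝ) < Real.sqrt n := Real.sqrt_pos.mpr (by exact_mod_cast hn)
      exact Nat.one_le_iff_ne_zero.mpr (by positivity)
    have hsq : n ≤ ⌈Real.sqrt n⌉₊ * ⌈Real.sqrt n⌉₊ := by
      have h1 : Real.sqrt n ≤ (⌈Real.sqrt n⌉₊ : ℝ) := Nat.le_ceil _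
      have h0 : (0 : ℝ) ≤ Real.sqrt n := Real.sqrt_nonneg _
      have h2 : (n : ℝ) ≤ (⌈Real.sqrt n⌉₊ : ℝ) * (⌈Real.sqrt n⌉₊ : ℝ) := by
        nlinarith [Real.sq_sqrt (show (0 : ℝ) ≤ (n : ℝ) by positivity)]
      exact_mod_cast h2
    exact Stmt3Aux.main π _ hs hsq
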